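/- Let x* be the unique minimizer of Γ over (ℓ, u), let 0 < ε ≤ 1/36, and let x ∈ (ℓ, u) satisfy Γ(x) - Γ(x*) ≤ ε. Then both x and x* lie in the interval Î := [ℓ + (u-ℓ)/4, u - (u-ℓ)/4], and the derivative of Γ at x satisfies |Γ'(x)| ≤ (32/(u-ℓ))·√ε. -/

import Mathlib

lemma stmt12_aux (a b : ℝ) (ha : 0 < a) (hb : 0 < b) :
    8 / (a + b)^2 ≤ (a^2)⁻¹ + (b^2)⁻¹ := by
  rw [div_le_iff₀ (by positivity)]
  have e : (a^2)⁻¹ + (b^2)⁻¹ = (a^2 + b^2) / (a^2 * b^2) := by field_simp; ring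
  rw [e, div_mul_eq_mul_div, le_div_iff₀ (by positivity)]
  nlinarith [sq_nonneg (a^2 - b^2), mul_nonneg (mul_nonneg ha.le hb.le) (sq_nonneg (a - b))]

set_option maxHeartbeats 1000000 in

theorem stmt_12 (xL xR Δ : ℝ) (hΔ : 0 < Δ) (ℓ u : ℝ)
    (hℓ : ℓ = max (-Δ) xL) (hu : u = min Δ xR) (hℓu : ℓ < u)
    (Γ : ℝ → ℝ)
    (hΓ : ∀ x, Γ x = -Real.log (x - xL) - Real.log (xR - x)
      - Real.log (Δ + x) - Real.log (Δ - x))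
    (xstar : ℝ) (hmem : xstar ∈ Set.Ioo ℓ u) (hmin : IsMinOn Γ (Set.Ioo ℓ u) xstar)
    (ε : ℝ) (hε0 : 0 < ε) (hε1 : ε ≤ 1 / 36)
    (x : ℝ) (hx : x ∈ Set.Ioo ℓ u) (hgap : Γ x - Γ xstar ≤ ε) :
    x ∈ Set.Icc (ℓ + (u - ℓ) / 4) (u - (u - ℓ) / 4) ∧
    xstar ∈ Set.Icc (ℓ + (u - ℓ) / 4) (u - (u - ℓ) / 4) ∧
    |deriv Γ x| ≤ (32 / (u - ℓ)) * Real.sqrt ε := by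
  obtain ⟨hx1, hx2⟩ := hx
  obtain ⟨hs1, hs2⟩ := hmem
  have hxL : xL ≤ ℓ := hℓ ▸ le_max_right _ _
  have hΔℓ : -Δ ≤ ℓ := hℓ ▸ le_max_left _ _
  have huxR : u ≤ xR := hu ▸ min_le_right _ _
  have huΔ : u ≤ Δ := hu ▸ min_le_left _ _
  set L := u - ℓ with hLdef
  clear_value L
  have hL0 : 0 < L := by simp only [hLdef]; linarith
  set g : ℝ → ℝ := fun y => -(y-xL)⁻¹ + (xR-y)⁻¹ - (Δ+y)⁻¹ + (Δ-y)⁻¹ with hgdef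
  set G : ℝ → ℝ := fun y => ((y-xL)^2)⁻¹ + ((xR-y)^2)⁻¹ + ((Δ+y)^2)⁻¹ + ((Δ-y)^2)⁻¹ with hGdef
  have pos : ∀ y ∈ Set.Ioo ℓ u, 0 < y - xL ∧ 0 < xR - y ∧ 0 < Δ + y ∧ 0 < Δ - y := by
    rintro y ⟨h1, h2⟩
    exact ⟨by linarith, by linarith, by linarith, by linarith⟩
  -- derivative of Γ
  have hΓd : ∀ y ∈ Set.Ioo ℓ u, HasDerivAt Γ (g y) y := by
    intro y hy
    obtain ⟨h1, h2, h3, h4⟩ := pos y hy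
    have e : Γ = fun z => -Real.log (z - xL) - Real.log (xR - z)
        - Real.log (Δ + z) - Real.log (Δ - z) := funext hΓ
    rw [e]
    have d1 : HasDerivAt (fun z : ℝ => Real.log (z - xL)) ((y - xL)⁻¹) y := by
      simpa using ((hasDerivAt_id y).sub_const xL).log h1.ne'
    have d2 : HasDerivAt (fun z : ℝ => Real.log (xR - z)) (-(xR - y)⁻¹) y := by
      simpa [neg_div, one_div] using ((hasDerivAt_id y).const_sub xR).log h2.ne'
    have d3 : HasDerivAt (fun z : ℝ => Real.log (Δ + z)) ((Δ + y)⁻¹) y := by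
      simpa using ((hasDerivAt_id y).const_add Δ).log h3.ne'
    have d4 : HasDerivAt (fun z : ℝ => Real.log (Δ - z)) (-(Δ - y)⁻¹) y := by
      simpa [neg_div, one_div] using ((hasDerivAt_id y).const_sub Δ).log h4.ne'
    have := ((d1.fun_neg.fun_sub d2).fun_sub d3).fun_sub d4
    refine this.congr_deriv ?_
    simp only [hgdef]; ring
  -- derivative of g
  have hgd : ∀ y ∈ Set.Ioo ℓ u, HasDerivAt g (G y) y := by
    intro y hy
    obtain ⟨h1, h2, h3, h4⟩ := pos y hy
    have d1 : HasDerivAt (fun z : ℝ => (z - xL)⁻¹) (-1 / (y - xL)^2) y := by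
      simpa using ((hasDerivAt_id y).sub_const xL).fun_inv h1.ne'
    have d2 : HasDerivAt (fun z : ℝ => (xR - z)⁻¹) (1 / (xR - y)^2) y := by
      simpa using ((hasDerivAt_id y).const_sub xR).fun_inv h2.ne'
    have d3 : HasDerivAt (fun z : ℝ => (Δ + z)⁻¹) (-1 / (Δ + y)^2) y := by
      simpa using ((hasDerivAt_id y).const_add Δ).fun_inv h3.ne'
    have d4 : HasDerivAt (fun z : ℝ => (Δ - z)⁻¹) (1 / (Δ - y)^2) y := by
      simpa using ((hasDerivAt_id y).const_sub Δ).fun_inv h4.ne'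
    have := ((d1.fun_neg.fun_add d2).fun_sub d3).fun_add d4
    refine this.congr_deriv ?_
    simp only [hGdef]
    field_simp
    ring
  -- derivative of Γ vanishes at xstar
  have hgzero : g xstar = 0 := by
    have hloc : IsLocalMin Γ xstar := hmin.isLocalMin (isOpen_Ioo.mem_nhds ⟨hs1, hs2⟩)
    exact hloc.hasDerivAt_eq_zero (hΓd xstar ⟨hs1, hs2⟩)
  obtain ⟨p1, p2, p3, p4⟩ := pos xstar ⟨hs1, hs2⟩
  have hsl : 0 < xstar - ℓ := by linarith
  have hsu : 0 < u - xstar := by linarith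
  -- localization of xstar
  have key1 : (xstar - ℓ)⁻¹ ≤ (xstar - xL)⁻¹ + (Δ + xstar)⁻¹ := by
    rcases max_cases (-Δ) xL with ⟨h, _⟩ | ⟨h, _⟩
    · have e : xstar - ℓ = Δ + xstar := by rw [hℓ, h]; ring
      rw [e]
      have : 0 < (xstar - xL)⁻¹ := inv_pos.2 p1
      linarith
    · have e : xstar - ℓ = xstar - xL := by rw [hℓ, h]
      rw [e]
      have : 0 < (Δ + xstar)⁻¹ := inv_pos.2 p3
      linarith
  have key1' : (u - xstar)⁻¹ ≤ (xR - xstar)⁻¹ + (Δ - xstar)⁻¹ := by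
    rcases min_cases Δ xR with ⟨h, _⟩ | ⟨h, _⟩
    · have e : u - xstar = Δ - xstar := by rw [hu, h]
      rw [e]
      have : 0 < (xR - xstar)⁻¹ := inv_pos.2 p2
      linarith
    · have e : u - xstar = xR - xstar := by rw [hu, h]
      rw [e]
      have : 0 < (Δ - xstar)⁻¹ := inv_pos.2 p4
      linarith
  have key2 : (xR - xstar)⁻¹ + (Δ - xstar)⁻¹ ≤ 2 * (u - xstar)⁻¹ := by
    have e1 : (xR - xstar)⁻¹ ≤ (u - xstar)⁻¹ := inv_anti₀ hsu (by linarith)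
    have e2 : (Δ - xstar)⁻¹ ≤ (u - xstar)⁻¹ := inv_anti₀ hsu (by linarith)
    linarith
  have key2' : (xstar - xL)⁻¹ + (Δ + xstar)⁻¹ ≤ 2 * (xstar - ℓ)⁻¹ := by
    have e1 : (xstar - xL)⁻¹ ≤ (xstar - ℓ)⁻¹ := inv_anti₀ hsl (by linarith)
    have e2 : (Δ + xstar)⁻¹ ≤ (xstar - ℓ)⁻¹ := inv_anti₀ hsl (by linarith)
    linarith
  have keyeq : (xstar - xL)⁻¹ + (Δ + xstar)⁻¹ = (xR - xstar)⁻¹ + (Δ - xstar)⁻¹ := by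
    have h0 : g xstar = 0 := hgzero
    simp only [hgdef] at h0
    linarith
  have hA : u - xstar ≤ 2 * (xstar - ℓ) := by
    have hc : (xstar - ℓ)⁻¹ ≤ 2 * (u - xstar)⁻¹ := by
      calc (xstar - ℓ)⁻¹ ≤ (xstar - xL)⁻¹ + (Δ + xstar)⁻¹ := key1
        _ = (xR - xstar)⁻¹ + (Δ - xstar)⁻¹ := keyeq
        _ ≤ 2 * (u - xstar)⁻¹ := key2
    have hm := mul_le_mul_of_nonneg_right hc (le_of_lt (mul_pos hsl hsu))
    rw [inv_mul_cancel_left₀ hsl.ne'] at hm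
    have e : 2 * (u - xstar)⁻¹ * ((xstar - ℓ) * (u - xstar))
        = 2 * (xstar - ℓ) := by field_simp
    rw [e] at hm
    linarith
  have hB : xstar - ℓ ≤ 2 * (u - xstar) := by
    have hc : (u - xstar)⁻¹ ≤ 2 * (xstar - ℓ)⁻¹ := by
      calc (u - xstar)⁻¹ ≤ (xR - xstar)⁻¹ + (Δ - xstar)⁻¹ := key1'
        _ = (xstar - xL)⁻¹ + (Δ + xstar)⁻¹ := keyeq.symm
        _ ≤ 2 * (xstar - ℓ)⁻¹ := key2'
    have hm := mul_le_mul_of_nonneg_right hc (le_of_lt (mul_pos hsu hsl))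
    rw [inv_mul_cancel_left₀ hsu.ne'] at hm
    have e : 2 * (xstar - ℓ)⁻¹ * ((u - xstar) * (xstar - ℓ))
        = 2 * (u - xstar) := by field_simp
    rw [e] at hm
    linarith
  have hstar_lo : ℓ + L / 3 ≤ xstar := by simp only [hLdef]; linarith
  have hstar_hi : xstar ≤ u - L / 3 := by simp only [hLdef]; linarith
  -- lower bound on G : strong convexity
  have hGlb : ∀ y ∈ Set.Ioo ℓ u, 8 / L^2 ≤ G y := by
    intro y hy
    obtain ⟨h1, h2, h3, h4⟩ := pos y hy
    obtain ⟨hy1, hy2⟩ := hy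
    have hyl : 0 < y - ℓ := by linarith
    have hyu : 0 < u - y := by linarith
    have t1 : ((y - ℓ)^2)⁻¹ ≤ ((y - xL)^2)⁻¹ + ((Δ + y)^2)⁻¹ := by
      rcases max_cases (-Δ) xL with ⟨h, _⟩ | ⟨h, _⟩
      · have e : y - ℓ = Δ + y := by rw [hℓ, h]; ring
        rw [e]
        have : (0:ℝ) ≤ ((y - xL)^2)⁻¹ := by positivity
        linarith
      · have e : y - ℓ = y - xL := by rw [hℓ, h]
        rw [e]
        have : (0:ℝ) ≤ ((Δ + y)^2)⁻¹ := by positivity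
        linarith
    have t2 : ((u - y)^2)⁻¹ ≤ ((xR - y)^2)⁻¹ + ((Δ - y)^2)⁻¹ := by
      rcases min_cases Δ xR with ⟨h, _⟩ | ⟨h, _⟩
      · have e : u - y = Δ - y := by rw [hu, h]
        rw [e]
        have : (0:ℝ) ≤ ((xR - y)^2)⁻¹ := by positivity
        linarith
      · have e : u - y = xR - y := by rw [hu, h]
        rw [e]
        have : (0:ℝ) ≤ ((Δ - y)^2)⁻¹ := by positivity
        linarith
    have t3 : 8 / L^2 ≤ ((y - ℓ)^2)⁻¹ + ((u - y)^2)⁻¹ := by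
      have h := stmt12_aux (y - ℓ) (u - y) hyl hyu
      rwa [show y - ℓ + (u - y) = L from by simp only [hLdef]; ring] at h
    simp only [hGdef]
    linarith
  -- phi = derivative of the strongly-convex-corrected function
  set φ : ℝ → ℝ := fun y => g y - 8 / L^2 * (y - xstar) with hφdef
  have hφd : ∀ y ∈ Set.Ioo ℓ u, HasDerivAt φ (G y - 8 / L^2) y := by
    intro y hy
    have dq : HasDerivAt (fun z : ℝ => 8 / L^2 * (z - xstar)) (8 / L^2) y := by
      simpa using ((hasDerivAt_id y).sub_const xstar).const_mul (8 / L^2)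
    exact (hgd y hy).sub dq
  have hφmono : MonotoneOn φ (Set.Ioo ℓ u) := by
    apply monotoneOn_of_deriv_nonneg (convex_Ioo ℓ u)
    · intro y hy
      exact (hφd y hy).continuousAt.continuousWithinAt
    · intro y hy
      rw [interior_Ioo] at hy
      exact (hφd y hy).differentiableAt.differentiableWithinAt
    · intro y hy
      rw [interior_Ioo] at hy
      rw [(hφd y hy).deriv]
      linarith [hGlb y hy]
  have hφstar : φ xstar = 0 := by simp only [hφdef]; rw [hgzero]; ring
  -- the corrected function
  set F : ℝ → ℝ := fun y => Γ y - 4 / L^2 * (y - xstar)^2 with hFdef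
  have hFd : ∀ y ∈ Set.Ioo ℓ u, HasDerivAt F (φ y) y := by
    intro y hy
    have dq : HasDerivAt (fun z : ℝ => 4 / L^2 * (z - xstar)^2) (8 / L^2 * (y - xstar)) y := by
      have h := (((hasDerivAt_id y).sub_const xstar).fun_pow 2).const_mul (4 / L^2)
      refine h.congr_deriv ?_
      simp only [id_eq]
      push_cast
      ring
    exact (hΓd y hy).sub dq
  -- F xstar ≤ F x
  have hFmin : F xstar ≤ F x := by
    rcases le_total xstar x with hc | hc
    · have hsub : Set.Icc xstar x ⊆ Set.Ioo ℓ u := fun y hy =>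
        ⟨lt_of_lt_of_le hs1 hy.1, lt_of_le_of_lt hy.2 hx2⟩
      have hmono : MonotoneOn F (Set.Icc xstar x) := by
        apply monotoneOn_of_deriv_nonneg (convex_Icc _ _)
        · intro y hy
          exact (hFd y (hsub hy)).continuousAt.continuousWithinAt
        · intro y hy
          rw [interior_Icc] at hy
          exact (hFd y (hsub (Set.Ioo_subset_Icc_self hy))).differentiableAt.differentiableWithinAt
        · intro y hy
          rw [interior_Icc] at hy
          have hy' : y ∈ Set.Ioo ℓ u := hsub (Set.Ioo_subset_Icc_self hy)
          rw [(hFd y hy').deriv]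
          have := hφmono ⟨hs1, hs2⟩ hy' hy.1.le
          linarith [hφstar]
      exact hmono (Set.left_mem_Icc.2 hc) (Set.right_mem_Icc.2 hc) hc
    · have hsub : Set.Icc x xstar ⊆ Set.Ioo ℓ u := fun y hy =>
        ⟨lt_of_lt_of_le hx1 hy.1, lt_of_le_of_lt hy.2 hs2⟩
      have hanti : AntitoneOn F (Set.Icc x xstar) := by
        apply antitoneOn_of_deriv_nonpos (convex_Icc _ _)
        · intro y hy
          exact (hFd y (hsub hy)).continuousAt.continuousWithinAt
        · intro y hy
          rw [interior_Icc] at hy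
          exact (hFd y (hsub (Set.Ioo_subset_Icc_self hy))).differentiableAt.differentiableWithinAt
        · intro y hy
          rw [interior_Icc] at hy
          have hy' : y ∈ Set.Ioo ℓ u := hsub (Set.Ioo_subset_Icc_self hy)
          rw [(hFd y hy').deriv]
          have := hφmono hy' ⟨hs1, hs2⟩ hy.2.le
          linarith [hφstar]
      exact hanti (Set.left_mem_Icc.2 hc) (Set.right_mem_Icc.2 hc) hc
  -- distance bound
  have hq : 4 / L^2 * (x - xstar)^2 ≤ ε := by
    simp only [hFdef] at hFmin
    have e0 : (xstar - xstar)^2 = 0 := by ring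
    rw [e0, mul_zero, sub_zero] at hFmin
    linarith
  have hsqle : 4 * (x - xstar)^2 ≤ ε * L^2 := by
    have hm := mul_le_mul_of_nonneg_right hq (by positivity : (0:ℝ) ≤ L^2)
    have e : 4 / L^2 * (x - xstar)^2 * L^2 = 4 * (x - xstar)^2 := by
      field_simp
    rw [e] at hm
    linarith
  have hdist : |x - xstar| ≤ L / 2 * Real.sqrt ε := by
    have h2 : Real.sqrt ((x - xstar)^2) ≤ Real.sqrt ((L/2)^2 * ε) := by
      apply Real.sqrt_le_sqrt
      have e : (L/2)^2 * ε = ε * L^2 / 4 := by ring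
      rw [e]
      linarith
    have h3 : Real.sqrt ((L/2)^2 * ε) = L / 2 * Real.sqrt ε := by
      rw [Real.sqrt_mul (sq_nonneg _), Real.sqrt_sq (by positivity)]
    calc |x - xstar| = Real.sqrt ((x - xstar)^2) := (Real.sqrt_sq_eq_abs _).symm
      _ ≤ Real.sqrt ((L/2)^2 * ε) := h2
      _ = L / 2 * Real.sqrt ε := h3
  have hsqrt6 : Real.sqrt ε ≤ 1 / 6 := by
    have : Real.sqrt ε ≤ Real.sqrt (1/36) := Real.sqrt_le_sqrt hε1
    have e : Real.sqrt (1/36 : ℝ) = 1/6 := by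
      rw [show (1/36 : ℝ) = (1/6)^2 by norm_num, Real.sqrt_sq (by norm_num)]
    linarith [e ▸ this]
  have hdist12 : |x - xstar| ≤ L / 12 := by
    have := mul_le_mul_of_nonneg_left hsqrt6 (by positivity : (0:ℝ) ≤ L / 2)
    calc |x - xstar| ≤ L / 2 * Real.sqrt ε := hdist
      _ ≤ L / 2 * (1/6) := this
      _ = L / 12 := by ring
  have habs := abs_le.1 hdist12
  -- memberships
  obtain ⟨hab1, hab2⟩ := habs
  have hxmem : x ∈ Set.Icc (ℓ + L / 4) (u - L / 4) := by
    constructor <;> linarith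
  have hstarmem : xstar ∈ Set.Icc (ℓ + L / 4) (u - L / 4) := by
    constructor <;> linarith
  refine ⟨hxmem, hstarmem, ?_⟩
  -- derivative bound
  have hIsub : Set.Icc (ℓ + L / 4) (u - L / 4) ⊆ Set.Ioo ℓ u := by
    rintro y ⟨hy1, hy2⟩
    constructor <;> [linarith; linarith]
  have hGub : ∀ y ∈ Set.Icc (ℓ + L / 4) (u - L / 4), ‖G y‖ ≤ 64 / L^2 := by
    rintro y ⟨hy1, hy2⟩
    have b1 : L / 4 ≤ y - xL := by linarith
    have b2 : L / 4 ≤ xR - y := by linarith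
    have b3 : L / 4 ≤ Δ + y := by linarith
    have b4 : L / 4 ≤ Δ - y := by linarith
    have hq4 : (0:ℝ) < (L/4)^2 := by positivity
    have i1 : ((y - xL)^2)⁻¹ ≤ ((L/4)^2)⁻¹ :=
      inv_anti₀ hq4 (pow_le_pow_left₀ (by positivity) b1 2)
    have i2 : ((xR - y)^2)⁻¹ ≤ ((L/4)^2)⁻¹ :=
      inv_anti₀ hq4 (pow_le_pow_left₀ (by positivity) b2 2)
    have i3 : ((Δ + y)^2)⁻¹ ≤ ((L/4)^2)⁻¹ :=
      inv_anti₀ hq4 (pow_le_pow_left₀ (by positivity) b3 2)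
    have i4 : ((Δ - y)^2)⁻¹ ≤ ((L/4)^2)⁻¹ :=
      inv_anti₀ hq4 (pow_le_pow_left₀ (by positivity) b4 2)
    have e : ((L/4)^2)⁻¹ = 16 / L^2 := by
      rw [show (L/4)^2 = L^2/16 from by ring, inv_div]
    have hGnn : 0 ≤ G y := by simp only [hGdef]; positivity
    rw [Real.norm_eq_abs, abs_of_nonneg hGnn]
    rw [e] at i1 i2 i3 i4
    simp only [hGdef]
    calc ((y - xL)^2)⁻¹ + ((xR - y)^2)⁻¹ + ((Δ + y)^2)⁻¹ + ((Δ - y)^2)⁻¹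
        ≤ 16 / L^2 + 16 / L^2 + 16 / L^2 + 16 / L^2 :=
          add_le_add (add_le_add (add_le_add i1 i2) i3) i4
      _ = 64 / L^2 := by ring
  have hlip := (convex_Icc (ℓ + L / 4) (u - L / 4)).norm_image_sub_le_of_norm_hasDerivWithin_le
    (fun y hy => (hgd y (hIsub hy)).hasDerivWithinAt) hGub hstarmem hxmem
  rw [(hΓd x ⟨hx1, hx2⟩).deriv]
  have e1 : |g x| = ‖g x - g xstar‖ := by rw [hgzero, sub_zero, Real.norm_eq_abs]
  have e2 : ‖x - xstar‖ = |x - xstar| := Real.norm_eq_abs _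
  rw [e1]
  calc ‖g x - g xstar‖ ≤ 64 / L^2 * ‖x - xstar‖ := hlip
    _ ≤ 64 / L^2 * (L / 2 * Real.sqrt ε) := by
        rw [e2]
        exact mul_le_mul_of_nonneg_left hdist (by positivity)
    _ = 32 / L * Real.sqrt ε := by
        field_simp
        ring
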